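/- ∫₀^∞ (tanh(t/2)/t) e^{−t} dt = ln(π/2). -/

import Mathlib

open Real MeasureTheory Set Filter

namespace Stmt4Aux

lemma key_eq {a b t : ℝ} (hab : a ≤ b) (ht : 0 < t) :
    ∫ s in Ioc a b, Real.exp (-(s*t)) = (Real.exp (-(a*t)) - Real.exp (-(b*t)))/t := by
  rw [← intervalIntegral.integral_of_le hab]
  have hd : ∀ s ∈ Set.uIcc a b, HasDerivAt (fun u => -(Real.exp (-(u*t))/t))
      (Real.exp (-(s*t))) s := by
    intro s _
    have h1 : HasDerivAt (fun u : ℝ => -(u*t)) (-t) s := by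
      exact (hasDerivAt_mul_const t (x := s)).neg
    have h2 : HasDerivAt (fun u => -(Real.exp (-(u*t))/t)) _ s := (h1.exp.div_const t).neg
    convert h2 using 1
    field_simp
  rw [intervalIntegral.integral_eq_sub_of_hasDerivAt hd
    ((by fun_prop : Continuous fun s : ℝ => Real.exp (-(s*t))).intervalIntegrable a b)]
  field_simp
  ring

lemma frullani_integrable {a b : ℝ} (ha : 0 < a) (hab : a ≤ b) :
    IntegrableOn (fun t => (Real.exp (-(a*t)) - Real.exp (-(b*t)))/t) (Ioi (0:ℝ)) := by
  have hg : IntegrableOn (fun t => (b-a) * Real.exp (-(a*t))) (Ioi (0:ℝ)) := by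
    have := (exp_neg_integrableOn_Ioi 0 ha).const_mul (b-a)
    simpa [neg_mul, IntegrableOn] using this
  apply Integrable.mono' hg
  · refine (ContinuousOn.div ?_ continuousOn_id fun t ht => ne_of_gt ht).aestronglyMeasurable
      measurableSet_Ioi
    fun_prop
  · filter_upwards [ae_restrict_mem measurableSet_Ioi] with t ht
    have ht' : (0:ℝ) < t := ht
    have h1 : Real.exp (-(b*t)) = Real.exp (-(a*t)) * Real.exp (-((b-a)*t)) := by
      rw [← Real.exp_add]; ring_nf
    have h2 : 1 - ((b-a)*t) ≤ Real.exp (-((b-a)*t)) := by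
      linarith [Real.add_one_le_exp (-((b-a)*t))]
    have h3 : Real.exp (-(b*t)) ≤ Real.exp (-(a*t)) := by
      apply Real.exp_le_exp.2; nlinarith
    have h4 : 0 ≤ (Real.exp (-(a*t)) - Real.exp (-(b*t)))/t := by
      apply div_nonneg (by linarith) ht'.le
    rw [Real.norm_eq_abs, abs_of_nonneg h4, div_le_iff₀ ht']
    nlinarith [Real.exp_pos (-(a*t)), (Real.exp_pos (-((b-a)*t))).le]

lemma integral_exp_neg_mul {s : ℝ} (hs : 0 < s) :
    ∫ t in Ioi (0:ℝ), Real.exp (-(s * t)) = 1 / s := by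
  have := integral_comp_mul_left_Ioi (fun x => Real.exp (-x)) 0 hs
  simp only [mul_zero, neg_zero, integral_exp_neg_Ioi, Real.exp_zero, smul_eq_mul, mul_one]
    at this
  rw [this, one_div]

lemma frullani {a b : ℝ} (ha : 0 < a) (hab : a ≤ b) :
    ∫ t in Ioi (0:ℝ), (Real.exp (-(a*t)) - Real.exp (-(b*t)))/t = Real.log (b/a) := by
  have hb : 0 < b := lt_of_lt_of_le ha hab
  have hcont : Continuous fun p : ℝ × ℝ => Real.exp (-(p.2 * p.1)) := by fun_prop
  have hint : Integrable (fun p : ℝ × ℝ => Real.exp (-(p.2 * p.1)))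
      ((volume.restrict (Ioi (0:ℝ))).prod (volume.restrict (Ioc a b))) := by
    rw [integrable_prod_iff hcont.aestronglyMeasurable]
    constructor
    · exact ae_of_all _ fun t => (by fun_prop : Continuous fun s : ℝ =>
        Real.exp (-(s * t))).integrableOn_Ioc
    · apply (frullani_integrable ha hab).congr
      filter_upwards [ae_restrict_mem measurableSet_Ioi] with t ht
      simp only [Real.norm_eq_abs, Real.abs_exp]
      exact (key_eq hab ht).symm
  have swap := MeasureTheory.integral_integral_swap
    (f := fun t s : ℝ => Real.exp (-(s*t))) hint
  calc ∫ t in Ioi (0:ℝ), (Real.exp (-(a*t)) - Real.exp (-(b*t)))/t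
      = ∫ t in Ioi (0:ℝ), ∫ s in Ioc a b, Real.exp (-(s*t)) :=
        setIntegral_congr_fun measurableSet_Ioi fun t ht => (key_eq hab ht).symm
    _ = ∫ s in Ioc a b, ∫ t in Ioi (0:ℝ), Real.exp (-(s*t)) := swap
    _ = ∫ s in Ioc a b, 1/s :=
        setIntegral_congr_fun measurableSet_Ioc fun s hs =>
          integral_exp_neg_mul (lt_of_lt_of_le ha hs.1.le)
    _ = ∫ s in a..b, 1/s := (intervalIntegral.integral_of_le hab).symm
    _ = Real.log (b/a) := by
        apply integral_one_div
        intro h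
        rcases h with ⟨h1, _⟩
        rw [min_eq_left hab] at h1
        linarith

noncomputable def F (n : ℕ) : ℝ → ℝ := fun t =>
  (Real.exp (-((2*(n:ℝ)+1)*t)) - Real.exp (-((2*(n:ℝ)+2)*t)))/t
    - (Real.exp (-((2*(n:ℝ)+2)*t)) - Real.exp (-((2*(n:ℝ)+3)*t)))/t

lemma F_eq {n : ℕ} {t : ℝ} (ht : 0 < t) :
    F n t = (Real.exp (-t)^2)^n * (Real.exp (-t) * (1 - Real.exp (-t))^2 / t) := by
  have hA : Real.exp (-((2*(n:ℝ)+1)*t)) = Real.exp (-t) ^ (2*n+1) := by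
    rw [← Real.exp_nat_mul]; congr 1; push_cast; ring
  have hB : Real.exp (-((2*(n:ℝ)+2)*t)) = Real.exp (-t) ^ (2*n+2) := by
    rw [← Real.exp_nat_mul]; congr 1; push_cast; ring
  have hC : Real.exp (-((2*(n:ℝ)+3)*t)) = Real.exp (-t) ^ (2*n+3) := by
    rw [← Real.exp_nat_mul]; congr 1; push_cast; ring
  unfold F
  rw [hA, hB, hC, div_sub_div_same, ← mul_div_assoc]
  congr 1
  ring

lemma F_integrable (n : ℕ) : IntegrableOn (F n) (Ioi (0:ℝ)) := by
  unfold F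
  exact (frullani_integrable (by positivity) (by linarith)).sub
    (frullani_integrable (by positivity) (by linarith))

lemma F_integral (n : ℕ) :
    ∫ t in Ioi (0:ℝ), F n t
      = Real.log ((2*(n:ℝ)+2)/(2*(n:ℝ)+1)) - Real.log ((2*(n:ℝ)+3)/(2*(n:ℝ)+2)) := by
  unfold F
  rw [integral_sub (frullani_integrable (by positivity) (by linarith))
    (frullani_integrable (by positivity) (by linarith))]
  rw [frullani (by positivity) (by linarith), frullani (by positivity) (by linarith)]

lemma tanh_half (t : ℝ) :
    Real.tanh (t/2) = (1 - Real.exp (-t))/(1 + Real.exp (-t)) := by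
  rw [Real.tanh_eq_sinh_div_cosh, Real.sinh_eq, Real.cosh_eq]
  have h3 : Real.exp (t/2) * Real.exp (-t) = Real.exp (-t/2) := by
    rw [← Real.exp_add]; ring_nf
  have h4 : 0 < Real.exp (t/2) + Real.exp (-t/2) := by positivity
  have h5 : 0 < 1 + Real.exp (-t) := by positivity
  field_simp
  rw [neg_div] at h3
  linear_combination 2 * h3

lemma sum_eq {t : ℝ} (ht : 0 < t) :
    ∑' n : ℕ, F n t = Real.tanh (t/2)/t * Real.exp (-t) := by
  set x := Real.exp (-t) with hx
  have hx0 : 0 < x := Real.exp_pos _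
  have hx1 : x < 1 := by rw [hx]; exact Real.exp_lt_one_iff.2 (by linarith)
  have h : ∀ n : ℕ, F n t = (x^2)^n * (x * (1-x)^2 / t) := fun n => F_eq ht
  rw [tsum_congr h, tsum_mul_right, tsum_geometric_of_lt_one (by positivity) (by nlinarith)]
  rw [tanh_half]
  have h1 : (1:ℝ) - x^2 ≠ 0 := by nlinarith
  have h2 : (1:ℝ) + x ≠ 0 := by positivity
  field_simp
  ring

lemma F_nonneg {n : ℕ} {t : ℝ} (ht : t ∈ Ioi (0:ℝ)) : 0 ≤ F n t := by
  rw [F_eq ht]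
  have : (0:ℝ) < t := ht
  positivity

lemma hasSum_I :
    HasSum (fun n : ℕ => Real.log ((2*(n:ℝ)+2)/(2*(n:ℝ)+1))
      - Real.log ((2*(n:ℝ)+3)/(2*(n:ℝ)+2))) (Real.log (Real.pi/2)) := by
  have hnn : ∀ n : ℕ, 0 ≤ Real.log ((2*(n:ℝ)+2)/(2*(n:ℝ)+1))
      - Real.log ((2*(n:ℝ)+3)/(2*(n:ℝ)+2)) := by
    intro n
    have h1 : (0:ℝ) < 2*(n:ℝ)+1 := by positivity
    have h2 : (0:ℝ) < 2*(n:ℝ)+2 := by positivity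
    have h3 : (0:ℝ) < 2*(n:ℝ)+3 := by positivity
    have hle : (2*(n:ℝ)+3)/(2*(n:ℝ)+2) ≤ (2*(n:ℝ)+2)/(2*(n:ℝ)+1) := by
      rw [div_le_div_iff₀ h2 h1]; nlinarith
    have := Real.log_le_log (by positivity) hle
    linarith
  rw [hasSum_iff_tendsto_nat_of_nonneg hnn]
  have key : ∀ k : ℕ, ∑ i ∈ Finset.range k, (Real.log ((2*(i:ℝ)+2)/(2*(i:ℝ)+1))
      - Real.log ((2*(i:ℝ)+3)/(2*(i:ℝ)+2)))
      = Real.log (∏ i ∈ Finset.range k,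
          ((2:ℝ) * i + 2) / (2 * i + 1) * ((2 * i + 2) / (2 * i + 3))) := by
    intro k
    rw [Real.log_prod]
    · apply Finset.sum_congr rfl
      intro i _
      have h1 : (0:ℝ) < 2*(i:ℝ)+1 := by positivity
      have h2 : (0:ℝ) < 2*(i:ℝ)+2 := by positivity
      have h3 : (0:ℝ) < 2*(i:ℝ)+3 := by positivity
      rw [Real.log_mul (by positivity) (by positivity),
        Real.log_div (ne_of_gt h2) (ne_of_gt h1),
        Real.log_div (ne_of_gt h2) (ne_of_gt h3),
        Real.log_div (ne_of_gt h3) (ne_of_gt h2)]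
      ring
    · intro i _
      positivity
  simp_rw [key]
  have hpi : (0:ℝ) < Real.pi / 2 := by positivity
  exact ((Real.continuousAt_log (ne_of_gt hpi)).tendsto).comp Real.tendsto_prod_pi_div_two

end Stmt4Aux

open Stmt4Aux in
theorem stmt_4 :
    ∫ t in Set.Ioi (0:ℝ), (Real.tanh (t / 2) / t) * Real.exp (-t)
      = Real.log (Real.pi / 2) := by
  have hswap : ∫ t in Ioi (0:ℝ), (∑' n : ℕ, F n t)
      = ∑' n : ℕ, ∫ t in Ioi (0:ℝ), F n t := by
    refine (MeasureTheory.integral_tsum_of_summable_integral_norm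
      (fun n => F_integrable n) ?_).symm
    · have heq : ∀ n : ℕ, (∫ t in Ioi (0:ℝ), ‖F n t‖)
          = Real.log ((2*(n:ℝ)+2)/(2*(n:ℝ)+1)) - Real.log ((2*(n:ℝ)+3)/(2*(n:ℝ)+2)) := by
        intro n
        rw [← F_integral n]
        exact setIntegral_congr_fun measurableSet_Ioi fun t ht => norm_of_nonneg (F_nonneg ht)
      simp_rw [heq]
      exact hasSum_I.summable
  have h1 : ∫ t in Set.Ioi (0:ℝ), (Real.tanh (t / 2) / t) * Real.exp (-t)
      = ∫ t in Ioi (0:ℝ), (∑' n : ℕ, F n t) := by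
    apply setIntegral_congr_fun measurableSet_Ioi
    intro t ht
    exact (sum_eq ht).symm
  rw [h1, hswap]
  have h2 : ∀ n : ℕ, (∫ t in Ioi (0:ℝ), F n t)
      = Real.log ((2*(n:ℝ)+2)/(2*(n:ℝ)+1)) - Real.log ((2*(n:ℝ)+3)/(2*(n:ℝ)+2)) :=
    F_integral
  rw [tsum_congr h2]
  exact hasSum_I.tsum_eq
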